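/- Let s^1,…,s^k be time series with s^l ∈ ℝ^{m_l}, let n ≥ 1, and let lb_j ≤ ub_j be real numbers for j ∈ {1,…,n}. For l ∈ {1,…,k}, i ∈ {1,…,m_l}, j ∈ {1,…,n}, set M_{l,i,j} := max(|s^l_i − lb_j|, |ub_j − s^l_i|). For a tuple P = (P_1,…,P_k) of warping paths, where P_l has order m_l×n, define g(P) := min over z ∈ ∏_{j=1}^n [lb_j, ub_j] of (1/k) ∑_{l=1}^k ∑_{(i,j)∈V(P_l)} (z_j − s^l_i)² (the minimum exists since the feasible set is compact and the objective is continuous). Then for any two such tuples P = (P_1,…,P_k) and P̂ = (P̂_1,…,P̂_k): g(P) ≥ g(P̂) − (1/k) ∑_{l=1}^k ∑_{(i,j) ∈ V(P̂_l) \ V(P_l)} M_{l,i,j}². -/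
import Mathlib


/-- A warping path of order `m × n`: a finite sequence of pairs of positive
integers starting at `(1,1)`, ending at `(m,n)`, each step increasing the
coordinates by `(1,0)`, `(0,1)` or `(1,1)`. -/
structure WarpingPath (m n : ℕ) where
  len : ℕ
  len_pos : 0 < len
  pt : ℕ → ℕ × ℕ
  first : pt 0 = (1, 1)
  last : pt (len - 1) = (m, n)
  step : ∀ t, t + 1 < len →
    pt (t + 1) = ((pt t).1 + 1, (pt t).2) ∨
    pt (t + 1) = ((pt t).1, (pt t).2 + 1) ∨
    pt (t + 1) = ((pt t).1 + 1, (pt t).2 + 1)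

/-- The set of vertices `V(P)` of a warping path. -/
def WarpingPath.V {m n : ℕ} (P : WarpingPath m n) : Finset (ℕ × ℕ) :=
  (Finset.range P.len).image P.pt

/-- The cost `C_P(s, s') = ∑_{(i,j) ∈ V(P)} (s_i − s'_j)²` of a warping path. -/
noncomputable def WarpingPath.cost {m n : ℕ} (P : WarpingPath m n) (s s' : ℕ → ℝ) : ℝ :=
  ∑ v ∈ P.V, (s v.1 - s' v.2) ^ 2

/-- The dtw-distance between a time series `s` of length `m` and a time series
`s'` of length `n`: the minimum over all warping paths `P` of order `m × n` of
`√(C_P(s, s'))`. -/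
noncomputable def dtw (m n : ℕ) (s s' : ℕ → ℝ) : ℝ :=
  Real.sqrt (sInf {c : ℝ | ∃ P : WarpingPath m n, c = P.cost s s'})

lemma WarpingPath.snd_mono {m n : ℕ} (P : WarpingPath m n) {t d : ℕ}
    (h : t + d < P.len) : (P.pt t).2 ≤ (P.pt (t + d)).2 := by
  induction d with
  | zero => simp
  | succ d ih =>
    have ih' := ih (by omega)
    have hs := P.step (t + d) (by omega)
    rcases hs with h' | h' | h' <;>
      · rw [show t + (d+1) = t + d + 1 by ring, h']; simp; omega

lemma WarpingPath.mem_V_snd {m n : ℕ} (P : WarpingPath m n) {v : ℕ × ℕ}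
    (hv : v ∈ P.V) : 1 ≤ v.2 ∧ v.2 ≤ n := by
  obtain ⟨t, ht, rfl⟩ := Finset.mem_image.1 hv
  rw [Finset.mem_range] at ht
  constructor
  · have := P.snd_mono (t := 0) (d := t) (by simpa using ht)
    rw [P.first] at this; simpa using this
  · have := P.snd_mono (t := t) (d := P.len - 1 - t) (by omega)
    rw [show t + (P.len - 1 - t) = P.len - 1 by omega, P.last] at this
    exact this

theorem stmt14 (k : ℕ) (hk : 1 ≤ k) (m : Fin k → ℕ) (hm : ∀ l, 1 ≤ m l)
    (s : Fin k → ℕ → ℝ) (n : ℕ) (hn : 1 ≤ n)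
    (lb ub : ℕ → ℝ) (hlu : ∀ j ∈ Finset.Icc 1 n, lb j ≤ ub j)
    (M : Fin k → ℕ → ℕ → ℝ)
    (hM : ∀ l i j, M l i j = max |s l i - lb j| |ub j - s l i|)
    (g : (∀ l : Fin k, WarpingPath (m l) n) → ℝ)
    (hg : ∀ P : ∀ l : Fin k, WarpingPath (m l) n,
      IsLeast {r : ℝ | ∃ z : ℕ → ℝ, (∀ j ∈ Finset.Icc 1 n, lb j ≤ z j ∧ z j ≤ ub j) ∧
        r = (1 / (k : ℝ)) * ∑ l : Fin k, ∑ v ∈ (P l).V, (z v.2 - s l v.1) ^ 2} (g P))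
    (P Phat : ∀ l : Fin k, WarpingPath (m l) n) :
    g P ≥ g Phat -
      (1 / (k : ℝ)) * ∑ l : Fin k, ∑ v ∈ (Phat l).V \ (P l).V, (M l v.1 v.2) ^ 2 := by

  obtain ⟨⟨z, hz, hgP⟩, -⟩ := hg P
  have hkpos : (0:ℝ) < 1 / k := by positivity
  have hPhat : g Phat ≤ (1 / (k : ℝ)) * ∑ l : Fin k, ∑ v ∈ (Phat l).V, (z v.2 - s l v.1) ^ 2 :=
    (hg Phat).2 ⟨z, hz, rfl⟩
  have hsum : ∀ l : Fin k, ∑ v ∈ (Phat l).V, (z v.2 - s l v.1) ^ 2 ≤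
      (∑ v ∈ (P l).V, (z v.2 - s l v.1) ^ 2) +
      ∑ v ∈ (Phat l).V \ (P l).V, (M l v.1 v.2) ^ 2 := by
    intro l
    rw [← Finset.sum_inter_add_sum_sdiff (Phat l).V (P l).V (fun v => (z v.2 - s l v.1) ^ 2)]
    gcongr ?_ + ?_
    · exact Finset.sum_le_sum_of_subset_of_nonneg (Finset.inter_subset_right)
        (fun v _ _ => by positivity)
    · apply Finset.sum_le_sum
      intro v hv
      have hvV : v ∈ (Phat l).V := (Finset.mem_sdiff.1 hv).1
      obtain ⟨h1, h2⟩ := (Phat l).mem_V_snd hvV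
      have hzv := hz v.2 (Finset.mem_Icc.2 ⟨h1, h2⟩)
      have habs1 : s l v.1 - lb v.2 ≤ |s l v.1 - lb v.2| := le_abs_self _
      have habs2 : ub v.2 - s l v.1 ≤ |ub v.2 - s l v.1| := le_abs_self _
      have hmax1 : |s l v.1 - lb v.2| ≤ M l v.1 v.2 := by rw [hM]; exact le_max_left _ _
      have hmax2 : |ub v.2 - s l v.1| ≤ M l v.1 v.2 := by rw [hM]; exact le_max_right _ _
      exact sq_le_sq' (by linarith) (by linarith)
  have htot : ∑ l : Fin k, ∑ v ∈ (Phat l).V, (z v.2 - s l v.1) ^ 2 ≤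
      (∑ l : Fin k, ∑ v ∈ (P l).V, (z v.2 - s l v.1) ^ 2) +
      ∑ l : Fin k, ∑ v ∈ (Phat l).V \ (P l).V, (M l v.1 v.2) ^ 2 := by
    rw [← Finset.sum_add_distrib]
    exact Finset.sum_le_sum fun l _ => hsum l
  have := mul_le_mul_of_nonneg_left htot (le_of_lt hkpos)
  rw [mul_add] at this
  linarith [hgP]
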